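/- arXiv:2512.16062 — 5 statements merged into one kernel-verified Lean document; each statement's English description precedes it below -/
import Mathlib

section
/- Greedy coloring lemma (Erdős): Let G be a graph on n vertices and let m₀, r be positive integers such that every induced subgraph G' of G on at least m₀ vertices contains an independent set of size at least r. Then χ(G) ≤ n/r + m₀. -/
open SimpleGraph Finset

/-- The independence number: the clique number of the complement. -/
noncomputable def indepNum {V : Type*} (G : SimpleGraph V) : ℕ :=
  Gᶜ.cliqueNum

/-- The chromatic number as a natural number. -/
noncomputable def chromNum {V : Type*} (G : SimpleGraph V) : ℕ :=
  G.chromaticNumber.toNat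

/-- The two-color Ramsey number `R(s,t)`: least `n` such that every graph on `n`
vertices contains a clique of size `s` or an independent set of size `t`. -/
noncomputable def ramsey (s t : ℕ) : ℕ :=
  sInf {n | ∀ G : SimpleGraph (Fin n),
    (∃ A : Finset (Fin n), G.IsNClique s A) ∨ (∃ B : Finset (Fin n), Gᶜ.IsNClique t B)}

lemma greedy_aux (n m₀ r : ℕ) (hm₀ : 0 < m₀) (hr : 0 < r)
    (G : SimpleGraph (Fin n))
    (h : ∀ S : Finset (Fin n), m₀ ≤ S.card → ∃ T ⊆ S, Gᶜ.IsNClique r T) :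
    ∀ s : Finset (Fin n), ∃ f : Fin n → ℕ,
      (∀ v ∈ s, f v < s.card / r + m₀) ∧
      (∀ v ∈ s, ∀ w ∈ s, G.Adj v w → f v ≠ f w) := by
  intro s
  induction s using Finset.strongInduction with
  | _ s IH =>
    by_cases hc : s.card < m₀
    · -- base case: give all vertices distinct colors
      refine ⟨fun v => (s.filter (· < v)).card, ?_, ?_⟩
      · intro v hv
        show (s.filter (· < v)).card < s.card / r + m₀
        have h1 : (s.filter (· < v)).card < s.card := by
          apply Finset.card_lt_card
          constructor
          · exact Finset.filter_subset _ _
          · intro hsub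
            have := hsub hv
            simp at this
        exact lt_of_lt_of_le (lt_trans h1 hc) (Nat.le_add_left _ _)
      · intro v hv w hw hadj
        have hne : v ≠ w := hadj.ne
        have key : ∀ a b : Fin n, a ∈ s → b ∈ s → a < b →
            (s.filter (· < a)).card < (s.filter (· < b)).card := by
          intro a b ha hb hab
          apply Finset.card_lt_card
          constructor
          · intro x hx
            simp only [Finset.mem_filter] at hx ⊢
            exact ⟨hx.1, lt_trans hx.2 hab⟩
          · intro hsub
            have : a ∈ s.filter (· < b) := by simp [ha, hab]
            have := hsub this
            simp at this
        rcases lt_or_gt_of_ne hne with h1 | h1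
        · exact Nat.ne_of_lt (key v w hv hw h1)
        · exact Nat.ne_of_gt (key w v hw hv h1)
    · -- inductive step: remove an independent set of size r
      push_neg at hc
      obtain ⟨T, hTs, hT⟩ := h s hc
      have hTcard : T.card = r := hT.2
      have hTne : T.Nonempty := by
        rw [← Finset.card_pos, hTcard]; exact hr
      have hrs : r ≤ s.card := hTcard ▸ Finset.card_le_card hTs
      have hssub : s \ T ⊂ s := Finset.sdiff_ssubset hTs hTne
      obtain ⟨f, hf1, hf2⟩ := IH (s \ T) hssub
      have hcard : (s \ T).card = s.card - r := by
        rw [Finset.card_sdiff_of_subset hTs, hTcard]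
      set K := (s.card - r) / r + m₀ with hK
      have hdiv : s.card / r = (s.card - r) / r + 1 := Nat.div_eq_sub_div hr hrs
      have hKlt : K < s.card / r + m₀ := by omega
      refine ⟨fun v => if v ∈ T then K else f v, ?_, ?_⟩
      · intro v hv
        by_cases hvT : v ∈ T
        · simp [hvT]; omega
        · simp only [hvT, if_false]
          have := hf1 v (Finset.mem_sdiff.mpr ⟨hv, hvT⟩)
          rw [hcard] at this
          omega
      · intro v hv w hw hadj
        by_cases hvT : v ∈ T <;> by_cases hwT : w ∈ T
        · exfalso
          have hcadj : Gᶜ.Adj v w := hT.1 hvT hwT hadj.ne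
          rw [SimpleGraph.compl_adj] at hcadj
          exact hcadj.2 hadj
        · simp only [hvT, hwT, if_true, if_false]
          have := hf1 w (Finset.mem_sdiff.mpr ⟨hw, hwT⟩)
          rw [hcard] at this
          omega
        · simp only [hvT, hwT, if_true, if_false]
          have := hf1 v (Finset.mem_sdiff.mpr ⟨hv, hvT⟩)
          rw [hcard] at this
          omega
        · simp only [hvT, hwT, if_false]
          exact hf2 v (Finset.mem_sdiff.mpr ⟨hv, hvT⟩)
            w (Finset.mem_sdiff.mpr ⟨hw, hwT⟩) hadj

theorem greedy_coloring_lemma (n m₀ r : ℕ) (hm₀ : 0 < m₀) (hr : 0 < r)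
    (G : SimpleGraph (Fin n))
    (h : ∀ S : Finset (Fin n), m₀ ≤ S.card → ∃ T ⊆ S, Gᶜ.IsNClique r T) :
    (chromNum G : ℝ) ≤ (n : ℝ) / (r : ℝ) + (m₀ : ℝ) := by
  obtain ⟨f, hf1, hf2⟩ := greedy_aux n m₀ r hm₀ hr G h Finset.univ
  simp only [Finset.card_univ, Fintype.card_fin, Finset.mem_univ, true_implies] at hf1 hf2
  have hcol : G.Colorable (n / r + m₀) := by
    refine ⟨SimpleGraph.Coloring.mk (fun v => (⟨f v, hf1 v⟩ : Fin (n / r + m₀))) ?_⟩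
    intro v w hadj
    simp only [Ne, Fin.mk.injEq]
    exact hf2 v w hadj
  have hle : G.chromaticNumber ≤ (n / r + m₀ : ℕ) := hcol.chromaticNumber_le
  have hnat : chromNum G ≤ n / r + m₀ := by
    unfold chromNum
    have := ENat.toNat_le_toNat hle (ENat.coe_ne_top _)
    rwa [ENat.toNat_coe] at this
  calc (chromNum G : ℝ) ≤ ((n / r + m₀ : ℕ) : ℝ) := by exact_mod_cast hnat
    _ ≤ (n : ℝ) / (r : ℝ) + (m₀ : ℝ) := by
        push_cast
        have := Nat.cast_div_le (α := ℝ) (m := n) (n := r)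
        linarith
end

section
/- Erdős–Szekeres bound: for all positive integers s and t, the Ramsey number satisfies R(s,t) ≤ C(s+t−2, s−1). -/
open SimpleGraph Finset

lemma lift_clique {V : Type} (G : SimpleGraph V) (S : Set V) {k : ℕ} {A : Finset S}
    (h : (G.induce S).IsNClique k A) :
    ∃ B : Finset V, G.IsNClique k B ∧ ↑B ⊆ S := by
  refine ⟨A.map ⟨Subtype.val, Subtype.val_injective⟩, ⟨?_, by simp [h.card_eq]⟩, ?_⟩
  · intro x hx y hy hxy
    simp only [Finset.coe_map, Set.mem_image, Finset.mem_coe,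
      Function.Embedding.coeFn_mk] at hx hy
    obtain ⟨a, ha, rfl⟩ := hx; obtain ⟨b, hb, rfl⟩ := hy
    exact h.isClique ha hb (fun e => hxy (by rw [e]))
  · intro x hx
    simp only [Finset.coe_map, Set.mem_image, Finset.mem_coe,
      Function.Embedding.coeFn_mk] at hx
    obtain ⟨a, _, rfl⟩ := hx; exact a.2

lemma induce_compl' {V : Type} (G : SimpleGraph V) (S : Set V) :
    (Gᶜ).induce S = (G.induce S)ᶜ := by
  ext a b
  simp only [comap_adj, Function.Embedding.coe_subtype, compl_adj]
  exact and_congr_left (fun _ => Subtype.coe_injective.ne_iff)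

lemma ramsey_key : ∀ (n s t : ℕ), 0 < s → 0 < t → s + t ≤ n →
    ∀ (V : Type) [Fintype V] (G : SimpleGraph V),
    (s + t - 2).choose (s - 1) ≤ Fintype.card V →
    (∃ A : Finset V, G.IsNClique s A) ∨ (∃ B : Finset V, Gᶜ.IsNClique t B) := by
  intro n
  induction n with
  | zero => intro s t hs ht hst; omega
  | succ n ih =>
    intro s t hs ht hst V _ G hcard
    classical
    have hcard1 : 1 ≤ Fintype.card V := by
      refine le_trans ?_ hcard
      exact Nat.succ_le_of_lt (Nat.choose_pos (by omega))
    obtain ⟨v⟩ : Nonempty V := Fintype.card_pos_iff.mp hcard1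
    rcases eq_or_lt_of_le (show 1 ≤ s from hs) with h1 | hs2
    · left
      exact ⟨{v}, by constructor <;> simp [← h1]⟩
    rcases eq_or_lt_of_le (show 1 ≤ t from ht) with h1 | ht2
    · right
      exact ⟨{v}, by constructor <;> simp [← h1]⟩
    -- now s ≥ 2, t ≥ 2
    have hpascal : (s + t - 2).choose (s - 1)
        = (s + t - 3).choose (s - 2) + (s + t - 3).choose (s - 1) := by
      have h1 : s + t - 2 = (s + t - 3) + 1 := by omega
      have h2 : s - 1 = (s - 2) + 1 := by omega
      rw [h1, h2, Nat.choose_succ_succ]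
    set NB := univ.filter (fun u => G.Adj v u) with hNB
    set CB := univ.filter (fun u => u ≠ v ∧ ¬ G.Adj v u) with hCB
    have hunion : NB ∪ CB = univ.erase v := by
      ext u
      simp only [hNB, hCB, Finset.mem_union, Finset.mem_filter, Finset.mem_univ, true_and,
        Finset.mem_erase, and_true]
      constructor
      · rintro (h | ⟨h, _⟩)
        · exact h.ne'
        · exact h
      · intro h
        by_cases hadj : G.Adj v u
        · exact Or.inl hadj
        · exact Or.inr ⟨h, hadj⟩
    have hdisj : Disjoint NB CB := by
      rw [Finset.disjoint_left]
      intro a ha hb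
      simp only [hNB, hCB, Finset.mem_filter, Finset.mem_univ, true_and] at ha hb
      exact hb.2 ha
    have hsum : NB.card + CB.card + 1 = Fintype.card V := by
      have := Finset.card_union_of_disjoint hdisj
      rw [hunion, Finset.card_erase_of_mem (Finset.mem_univ v), Finset.card_univ] at this
      omega
    have hkey : (s + t - 3).choose (s - 2) ≤ NB.card
        ∨ (s + t - 3).choose (s - 1) ≤ CB.card := by omega
    rcases hkey with hk | hk
    · -- neighbors big: use (s-1, t)
      have hcard2 : ((s - 1) + t - 2).choose ((s - 1) - 1)
          ≤ Fintype.card ↥(↑NB : Set V) := by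
        have : Fintype.card ↥(↑NB : Set V) = NB.card := by
          simpa using Fintype.card_coe NB
        rw [this]
        have e1 : (s - 1) + t - 2 = s + t - 3 := by omega
        have e2 : (s - 1) - 1 = s - 2 := by omega
        rw [e1, e2]; exact hk
      rcases ih (s - 1) t (by omega) ht (by omega) _ (G.induce (↑NB : Set V)) hcard2 with
        ⟨A, hA⟩ | ⟨B, hB⟩
      · obtain ⟨B, hB, hBsub⟩ := lift_clique G _ hA
        left
        have hvB : v ∉ B := by
          intro hv
          have := hBsub hv
          simp only [hNB, Finset.coe_filter, Set.mem_setOf_eq, Finset.mem_univ, true_and] at this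
          exact G.loopless.irrefl v this
        have hadj : ∀ b ∈ B, G.Adj v b := by
          intro b hb
          have := hBsub hb
          simpa [hNB] using this
        have := hB.insert hadj
        have e : s - 1 + 1 = s := by omega
        rw [e] at this
        exact ⟨insert v B, this⟩
      · rw [← induce_compl'] at hB
        obtain ⟨B, hB, _⟩ := lift_clique Gᶜ _ hB
        exact Or.inr ⟨B, hB⟩
    · -- non-neighbors big: use (s, t-1)
      have hcard2 : (s + (t - 1) - 2).choose (s - 1)
          ≤ Fintype.card ↥(↑CB : Set V) := by
        have : Fintype.card ↥(↑CB : Set V) = CB.card := by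
          simpa using Fintype.card_coe CB
        rw [this]
        have e1 : s + (t - 1) - 2 = s + t - 3 := by omega
        rw [e1]; exact hk
      rcases ih s (t - 1) hs (by omega) (by omega) _ (G.induce (↑CB : Set V)) hcard2 with
        ⟨A, hA⟩ | ⟨B, hB⟩
      · obtain ⟨B, hB, _⟩ := lift_clique G _ hA
        exact Or.inl ⟨B, hB⟩
      · rw [← induce_compl'] at hB
        obtain ⟨B, hB, hBsub⟩ := lift_clique Gᶜ _ hB
        right
        have hvB : v ∉ B := by
          intro hv
          have := hBsub hv
          simp [hCB] at this
        have hadj : ∀ b ∈ B, Gᶜ.Adj v b := by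
          intro b hb
          have := hBsub hb
          simp only [hCB, Finset.coe_filter, Set.mem_setOf_eq, Finset.mem_univ, true_and] at this
          exact ⟨this.1.symm, this.2⟩
        have := hB.insert hadj
        have e : t - 1 + 1 = t := by omega
        rw [e] at this
        exact ⟨insert v B, this⟩

theorem erdos_szekeres_bound (s t : ℕ) (hs : 0 < s) (ht : 0 < t) :
    ramsey s t ≤ (s + t - 2).choose (s - 1) := by
  apply Nat.sInf_le
  intro G
  exact ramsey_key (s + t) s t hs ht le_rfl _ G (by simp)
end

section
/- For real x in (0, 1/2], define φ(x) = (H(x) − δ·x·log₂ e)/√(x(1−x)) where H(x) = −x log₂ x − (1−x) log₂(1−x) and δ = 0.14/e. Then φ(x)² < 3.71943 for all x ∈ (0, 1/2]. -/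
open SimpleGraph Finset

/-- The binary entropy function. -/
noncomputable def binEnt (x : ℝ) : ℝ :=
  -x * Real.logb 2 x - (1 - x) * Real.logb 2 (1 - x)

/-- The function φ from the proof of Theorem 1.3, with δ = 0.14/e. -/
noncomputable def phi (x : ℝ) : ℝ :=
  (binEnt x - (0.14 / Real.exp 1) * x * Real.logb 2 (Real.exp 1)) /
    Real.sqrt (x * (1 - x))

set_option maxHeartbeats 2000000


lemma log_one_add_ge (t : ℝ) (ht : 0 ≤ t) :
    t - t^2/2 + t^3/3 - t^4/4 + t^5/5 - t^6/6 ≤ Real.log (1+t) := by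
  set f : ℝ → ℝ := fun u => Real.log (1+u) - (u - u^2/2 + u^3/3 - u^4/4 + u^5/5 - u^6/6) with hf
  have hd : ∀ u : ℝ, 0 ≤ u → HasDerivAt f (u^6/(1+u)) u := by
    intro u hu
    have h1 : HasDerivAt (fun u : ℝ => 1 + u) 1 u := by
      simpa using (hasDerivAt_id u).const_add 1
    have hpos : (0:ℝ) < 1 + u := by linarith
    have h2 : HasDerivAt (fun u : ℝ => Real.log (1+u)) ((1+u)⁻¹) u := by
      simpa [Function.comp_def] using (Real.hasDerivAt_log hpos.ne').comp u h1
    have h3 : HasDerivAt (fun u : ℝ => u - u^2/2 + u^3/3 - u^4/4 + u^5/5 - u^6/6)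
        (1 - u + u^2 - u^3 + u^4 - u^5) u := by
      have h := (((((hasDerivAt_id u).sub ((hasDerivAt_pow 2 u).div_const 2)).add
        ((hasDerivAt_pow 3 u).div_const 3)).sub ((hasDerivAt_pow 4 u).div_const 4)).add
        ((hasDerivAt_pow 5 u).div_const 5)).sub ((hasDerivAt_pow 6 u).div_const 6)
      refine h.congr_deriv ?_
      symm
      push_cast
      ring
    have h4 := h2.sub h3
    refine h4.congr_deriv ?_
    symm
    field_simp
    ring
  have hmono : MonotoneOn f (Set.Ici 0) := by
    apply monotoneOn_of_deriv_nonneg (convex_Ici 0)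
    · intro u hu
      exact ((hd u hu).differentiableAt).continuousAt.continuousWithinAt
    · intro u hu
      rw [interior_Ici] at hu
      exact ((hd u (le_of_lt hu)).differentiableAt).differentiableWithinAt
    · intro u hu
      rw [interior_Ici] at hu
      have hu' := Set.mem_Ioi.mp hu
      rw [(hd u (le_of_lt hu')).deriv]
      have : (0:ℝ) < 1 + u := by linarith
      positivity
  have h0 : f 0 = 0 := by simp [hf]
  have := hmono Set.self_mem_Ici (Set.mem_Ici.2 ht) ht
  rw [h0] at this
  simpa [hf, sub_nonneg] using this

lemma log_one_sub_ge (t : ℝ) (h0 : 0 ≤ t) (h1 : t < 1) :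
    -(t + t^2/2 + t^3/3 + t^4/4 + t^5/5 + t^6/6) - t^7/(7*(1-t)) ≤ Real.log (1-t) := by
  set f : ℝ → ℝ := fun u => Real.log (1-u) + (u + u^2/2 + u^3/3 + u^4/4 + u^5/5 + u^6/6)
    + u^7/(7*(1-u)) with hf
  have hd : ∀ u : ℝ, 0 ≤ u → u < 1 → HasDerivAt f (u^7/(7*(1-u)^2)) u := by
    intro u hu hu1
    have hpos : (0:ℝ) < 1 - u := by linarith
    have h1' : HasDerivAt (fun u : ℝ => 1 - u) (-1) u := by
      simpa using (hasDerivAt_id u).const_sub 1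
    have h2 : HasDerivAt (fun u : ℝ => Real.log (1-u)) (-(1-u)⁻¹) u := by
      simpa [Function.comp_def] using (Real.hasDerivAt_log hpos.ne').comp u h1'
    have h3 : HasDerivAt (fun u : ℝ => u + u^2/2 + u^3/3 + u^4/4 + u^5/5 + u^6/6)
        (1 + u + u^2 + u^3 + u^4 + u^5) u := by
      have h := (((((hasDerivAt_id u).add ((hasDerivAt_pow 2 u).div_const 2)).add
        ((hasDerivAt_pow 3 u).div_const 3)).add ((hasDerivAt_pow 4 u).div_const 4)).add
        ((hasDerivAt_pow 5 u).div_const 5)).add ((hasDerivAt_pow 6 u).div_const 6)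
      refine h.congr_deriv ?_
      symm
      push_cast
      ring
    have h5 : HasDerivAt (fun u : ℝ => 7*(1-u)) (-7) u := by
      simpa using h1'.const_mul 7
    have h4 : HasDerivAt (fun u : ℝ => u^7/(7*(1-u)))
        ((7*u^6*(7*(1-u)) - u^7*(-7))/(7*(1-u))^2) u := by
      have := (hasDerivAt_pow 7 u).div h5 (by positivity)
      refine this.congr_deriv ?_; push_cast; ring
    have h6 := (h2.add h3).add h4
    refine h6.congr_deriv ?_
    symm
    field_simp
    ring
  have hmono : MonotoneOn f (Set.Ico 0 1) := by
    apply monotoneOn_of_deriv_nonneg (convex_Ico 0 1)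
    · intro u hu
      exact ((hd u hu.1 hu.2).differentiableAt).continuousAt.continuousWithinAt
    · intro u hu
      rw [interior_Ico] at hu
      exact ((hd u (le_of_lt hu.1) hu.2).differentiableAt).differentiableWithinAt
    · intro u hu
      rw [interior_Ico] at hu
      obtain ⟨ha, hb⟩ := hu
      rw [(hd u (le_of_lt ha) hb).deriv]
      have : (0:ℝ) < 1 - u := by linarith
      positivity
  have hz : f 0 = 0 := by simp [hf]
  have := hmono (Set.mem_Ico.2 ⟨le_refl 0, one_pos⟩) (Set.mem_Ico.2 ⟨h0, h1⟩) h0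
  rw [hz] at this
  simp only [hf] at this
  linarith


/-- The core polynomial inequality. -/
lemma Qpos (t : ℝ) (h0 : (0:ℝ) ≤ t) (h9 : t ≤ 0.9) :
    4*(0.6931471808 - (0.14/2.7182818286)*(1-t)/2 - t^2/2 - t^4/12 - t^6/30 + t^7/14)^2 < (3.71943*0.6931471803^2)*(1-t^2) := by
  rcases le_or_gt t 0.15 with h1 | h1
  · nlinarith [sq_nonneg (t - 0.0777), mul_nonneg h0 (sq_nonneg (t-0.0777)), mul_nonneg (by linarith : (0:ℝ) ≤ 0.15 - t) (sq_nonneg (t-0.0777)), mul_nonneg (mul_nonneg h0 (by linarith : (0:ℝ) ≤ 0.1554 - t)) (sq_nonneg (t-0.0777)), mul_nonneg (by linarith : (0:ℝ) ≤ 0.15 - t) (sq_nonneg ((t-0.0777)^2)), mul_nonneg (mul_nonneg h0 (by linarith : (0:ℝ) ≤ 0.1554 - t)) (sq_nonneg ((t-0.0777)^2)), mul_nonneg h0 (sq_nonneg ((t-0.0777)^2)), mul_nonneg (by linarith : (0:ℝ) ≤ 0.15 - t) (sq_nonneg ((t-0.0777)^3)), mul_nonneg (mul_nonneg h0 (by linarith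 : (0:ℝ) ≤ 0.1554 - t)) (sq_nonneg ((t-0.0777)^3)), mul_nonneg h0 (sq_nonneg ((t-0.0777)^3)), mul_nonneg (by linarith : (0:ℝ) ≤ 0.15 - t) (sq_nonneg ((t-0.0777)^4)), mul_nonneg (mul_nonneg h0 (by linarith : (0:ℝ) ≤ 0.1554 - t)) (sq_nonneg ((t-0.0777)^4)), mul_nonneg h0 (sq_nonneg ((t-0.0777)^4)), mul_nonneg (by linarith : (0:ℝ) ≤ 0.15 - t) (sq_nonneg ((t-0.0777)^5)), mul_nonneg (mul_nonneg h0 (by linarith : (0:ℝ) ≤ 0.1554 - t)) (sq_nonneg ((t-0.0777)^5)), mul_nonneg h0 (sq_nonneg ((t-0.0777)^5)), mul_nonneg (by linarith : (0:ℝ) ≤ 0.15 - t) (sq_nonneg ((t-0.0777)^6)), mul_nonneg (mul_nonneg h0 (by linarith : (0:ℝ) ≤ 0.1554 - t)) (sq_nonneg ((t-0.0777)^6)), mul_nonneg h0 (sq_nonneg ((t-0.0777)^6)), mul_nonneg (by linarith : (0:ℝ) ≤ 0.15 - t) (sq_nonneg ((t-0.0777)^7)), mul_nonneg (mul_nonneg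 h0 (by linarith : (0:ℝ) ≤ 0.1554 - t)) (sq_nonneg ((t-0.0777)^7)), mul_nonneg h0 (sq_nonneg ((t-0.0777)^7))]
  rcases le_or_gt t 0.30 with h2 | h2
  · nlinarith [mul_nonneg (by linarith : (0:ℝ) ≤ 0.30 - t) (sq_nonneg ((t-0.225)^1)), mul_nonneg (by linarith : (0:ℝ) ≤ t - 0.15) (sq_nonneg ((t-0.225)^1)), mul_nonneg (mul_nonneg (by linarith : (0:ℝ) ≤ t - 0.15) (by linarith : (0:ℝ) ≤ 0.30 - t)) (sq_nonneg ((t-0.225)^1)), mul_nonneg (by linarith : (0:ℝ) ≤ 0.30 - t) (sq_nonneg ((t-0.225)^2)), mul_nonneg (by linarith : (0:ℝ) ≤ t - 0.15) (sq_nonneg ((t-0.225)^2)), mul_nonneg (mul_nonneg (by linarith : (0:ℝ) ≤ t - 0.15) (by linarith : (0:ℝ) ≤ 0.30 - t)) (sq_nonneg ((t-0.225)^2)), mul_nonneg (by linarith : (0:ℝ) ≤ 0.30 - t) (sq_nonneg ((t-0.225)^3)), mul_nonneg (by linarith : (0:ℝ) ≤ t - 0.15) (sq_nonneg ((t-0.225)^3)),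 mul_nonneg (mul_nonneg (by linarith : (0:ℝ) ≤ t - 0.15) (by linarith : (0:ℝ) ≤ 0.30 - t)) (sq_nonneg ((t-0.225)^3)), mul_nonneg (by linarith : (0:ℝ) ≤ 0.30 - t) (sq_nonneg ((t-0.225)^4)), mul_nonneg (by linarith : (0:ℝ) ≤ t - 0.15) (sq_nonneg ((t-0.225)^4)), mul_nonneg (mul_nonneg (by linarith : (0:ℝ) ≤ t - 0.15) (by linarith : (0:ℝ) ≤ 0.30 - t)) (sq_nonneg ((t-0.225)^4)), mul_nonneg (by linarith : (0:ℝ) ≤ 0.30 - t) (sq_nonneg ((t-0.225)^5)), mul_nonneg (by linarith : (0:ℝ) ≤ t - 0.15) (sq_nonneg ((t-0.225)^5)), mul_nonneg (mul_nonneg (by linarith : (0:ℝ) ≤ t - 0.15) (by linarith : (0:ℝ) ≤ 0.30 - t)) (sq_nonneg ((t-0.225)^5)), mul_nonneg (by linarith : (0:ℝ) ≤ 0.30 - t) (sq_nonneg ((t-0.225)^6)), mul_nonneg (by linarith : (0:ℝ) ≤ t - 0.15) (sq_nonneg ((t-0.225)^6)), mul_nonneg (mul_nonneg (by linarith : (0:ℝ)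 ≤ t - 0.15) (by linarith : (0:ℝ) ≤ 0.30 - t)) (sq_nonneg ((t-0.225)^6)), sq_nonneg ((t-0.225)^7), sq_nonneg (t-0.225)]
  rcases le_or_gt t 0.50 with h3 | h3
  · nlinarith [mul_nonneg (by linarith : (0:ℝ) ≤ 0.50 - t) (sq_nonneg ((t-0.40)^1)), mul_nonneg (by linarith : (0:ℝ) ≤ t - 0.30) (sq_nonneg ((t-0.40)^1)), mul_nonneg (mul_nonneg (by linarith : (0:ℝ) ≤ t - 0.30) (by linarith : (0:ℝ) ≤ 0.50 - t)) (sq_nonneg ((t-0.40)^1)), mul_nonneg (by linarith : (0:ℝ) ≤ 0.50 - t) (sq_nonneg ((t-0.40)^2)), mul_nonneg (by linarith : (0:ℝ) ≤ t - 0.30) (sq_nonneg ((t-0.40)^2)), mul_nonneg (mul_nonneg (by linarith : (0:ℝ) ≤ t - 0.30) (by linarith : (0:ℝ) ≤ 0.50 - t)) (sq_nonneg ((t-0.40)^2)), mul_nonneg (by linarith : (0:ℝ) ≤ 0.50 - t) (sq_nonneg ((t-0.40)^3)), mul_nonneg (by linarith : (0:ℝ) ≤ t - 0.30) (sq_nonneg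 ((t-0.40)^3)), mul_nonneg (mul_nonneg (by linarith : (0:ℝ) ≤ t - 0.30) (by linarith : (0:ℝ) ≤ 0.50 - t)) (sq_nonneg ((t-0.40)^3)), mul_nonneg (by linarith : (0:ℝ) ≤ 0.50 - t) (sq_nonneg ((t-0.40)^4)), mul_nonneg (by linarith : (0:ℝ) ≤ t - 0.30) (sq_nonneg ((t-0.40)^4)), mul_nonneg (mul_nonneg (by linarith : (0:ℝ) ≤ t - 0.30) (by linarith : (0:ℝ) ≤ 0.50 - t)) (sq_nonneg ((t-0.40)^4)), mul_nonneg (by linarith : (0:ℝ) ≤ 0.50 - t) (sq_nonneg ((t-0.40)^5)), mul_nonneg (by linarith : (0:ℝ) ≤ t - 0.30) (sq_nonneg ((t-0.40)^5)), mul_nonneg (mul_nonneg (by linarith : (0:ℝ) ≤ t - 0.30) (by linarith : (0:ℝ) ≤ 0.50 - t)) (sq_nonneg ((t-0.40)^5)), mul_nonneg (by linarith : (0:ℝ) ≤ 0.50 - t) (sq_nonneg ((t-0.40)^6)), mul_nonneg (by linarith : (0:ℝ) ≤ t - 0.30) (sq_nonneg ((t-0.40)^6)), mul_nonneg (mul_nonneg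 (by linarith : (0:ℝ) ≤ t - 0.30) (by linarith : (0:ℝ) ≤ 0.50 - t)) (sq_nonneg ((t-0.40)^6)), sq_nonneg ((t-0.40)^7), sq_nonneg (t-0.40)]
  rcases le_or_gt t 0.70 with h4 | h4
  · nlinarith [mul_nonneg (by linarith : (0:ℝ) ≤ 0.70 - t) (sq_nonneg ((t-0.60)^1)), mul_nonneg (by linarith : (0:ℝ) ≤ t - 0.50) (sq_nonneg ((t-0.60)^1)), mul_nonneg (mul_nonneg (by linarith : (0:ℝ) ≤ t - 0.50) (by linarith : (0:ℝ) ≤ 0.70 - t)) (sq_nonneg ((t-0.60)^1)), mul_nonneg (by linarith : (0:ℝ) ≤ 0.70 - t) (sq_nonneg ((t-0.60)^2)), mul_nonneg (by linarith : (0:ℝ) ≤ t - 0.50) (sq_nonneg ((t-0.60)^2)), mul_nonneg (mul_nonneg (by linarith : (0:ℝ) ≤ t - 0.50) (by linarith : (0:ℝ) ≤ 0.70 - t)) (sq_nonneg ((t-0.60)^2)), mul_nonneg (by linarith : (0:ℝ) ≤ 0.70 - t) (sq_nonneg ((t-0.60)^3)), mul_nonneg (by linarith : (0:ℝ) ≤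 t - 0.50) (sq_nonneg ((t-0.60)^3)), mul_nonneg (mul_nonneg (by linarith : (0:ℝ) ≤ t - 0.50) (by linarith : (0:ℝ) ≤ 0.70 - t)) (sq_nonneg ((t-0.60)^3)), mul_nonneg (by linarith : (0:ℝ) ≤ 0.70 - t) (sq_nonneg ((t-0.60)^4)), mul_nonneg (by linarith : (0:ℝ) ≤ t - 0.50) (sq_nonneg ((t-0.60)^4)), mul_nonneg (mul_nonneg (by linarith : (0:ℝ) ≤ t - 0.50) (by linarith : (0:ℝ) ≤ 0.70 - t)) (sq_nonneg ((t-0.60)^4)), mul_nonneg (by linarith : (0:ℝ) ≤ 0.70 - t) (sq_nonneg ((t-0.60)^5)), mul_nonneg (by linarith : (0:ℝ) ≤ t - 0.50) (sq_nonneg ((t-0.60)^5)), mul_nonneg (mul_nonneg (by linarith : (0:ℝ) ≤ t - 0.50) (by linarith : (0:ℝ) ≤ 0.70 - t)) (sq_nonneg ((t-0.60)^5)), mul_nonneg (by linarith : (0:ℝ) ≤ 0.70 - t) (sq_nonneg ((t-0.60)^6)), mul_nonneg (by linarith : (0:ℝ) ≤ t - 0.50) (sq_nonneg ((t-0.60)^6)),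 mul_nonneg (mul_nonneg (by linarith : (0:ℝ) ≤ t - 0.50) (by linarith : (0:ℝ) ≤ 0.70 - t)) (sq_nonneg ((t-0.60)^6)), sq_nonneg ((t-0.60)^7), sq_nonneg (t-0.60)]
  · nlinarith [mul_nonneg (by linarith : (0:ℝ) ≤ 0.90 - t) (sq_nonneg ((t-0.80)^1)), mul_nonneg (by linarith : (0:ℝ) ≤ t - 0.70) (sq_nonneg ((t-0.80)^1)), mul_nonneg (mul_nonneg (by linarith : (0:ℝ) ≤ t - 0.70) (by linarith : (0:ℝ) ≤ 0.90 - t)) (sq_nonneg ((t-0.80)^1)), mul_nonneg (by linarith : (0:ℝ) ≤ 0.90 - t) (sq_nonneg ((t-0.80)^2)), mul_nonneg (by linarith : (0:ℝ) ≤ t - 0.70) (sq_nonneg ((t-0.80)^2)), mul_nonneg (mul_nonneg (by linarith : (0:ℝ) ≤ t - 0.70) (by linarith : (0:ℝ) ≤ 0.90 - t)) (sq_nonneg ((t-0.80)^2)), mul_nonneg (by linarith : (0:ℝ) ≤ 0.90 - t) (sq_nonneg ((t-0.80)^3)), mul_nonneg (by linarith : (0:ℝ) ≤ t - 0.70) (sq_nonneg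 ((t-0.80)^3)), mul_nonneg (mul_nonneg (by linarith : (0:ℝ) ≤ t - 0.70) (by linarith : (0:ℝ) ≤ 0.90 - t)) (sq_nonneg ((t-0.80)^3)), mul_nonneg (by linarith : (0:ℝ) ≤ 0.90 - t) (sq_nonneg ((t-0.80)^4)), mul_nonneg (by linarith : (0:ℝ) ≤ t - 0.70) (sq_nonneg ((t-0.80)^4)), mul_nonneg (mul_nonneg (by linarith : (0:ℝ) ≤ t - 0.70) (by linarith : (0:ℝ) ≤ 0.90 - t)) (sq_nonneg ((t-0.80)^4)), mul_nonneg (by linarith : (0:ℝ) ≤ 0.90 - t) (sq_nonneg ((t-0.80)^5)), mul_nonneg (by linarith : (0:ℝ) ≤ t - 0.70) (sq_nonneg ((t-0.80)^5)), mul_nonneg (mul_nonneg (by linarith : (0:ℝ) ≤ t - 0.70) (by linarith : (0:ℝ) ≤ 0.90 - t)) (sq_nonneg ((t-0.80)^5)), mul_nonneg (by linarith : (0:ℝ) ≤ 0.90 - t) (sq_nonneg ((t-0.80)^6)), mul_nonneg (by linarith : (0:ℝ) ≤ t - 0.70) (sq_nonneg ((t-0.80)^6)), mul_nonneg (mul_nonneg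 (by linarith : (0:ℝ) ≤ t - 0.70) (by linarith : (0:ℝ) ≤ 0.90 - t)) (sq_nonneg ((t-0.80)^6)), sq_nonneg ((t-0.80)^7), sq_nonneg (t-0.80)]

lemma F_nonneg (x : ℝ) (hx : 0 < x) (hx2 : x ≤ 1/2) :
    0 ≤ -x*Real.log x - (1-x)*Real.log (1-x) - 0.14/Real.exp 1*x := by
  have h1 : Real.log x ≤ -Real.log 2 := by
    rw [← Real.log_inv]
    exact Real.log_le_log hx (by norm_num; linarith)
  have h2 : Real.log (1-x) ≤ 0 := Real.log_nonpos (by linarith) (by linarith)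
  have h3 : (2.7182818283:ℝ) < Real.exp 1 := Real.exp_one_gt_d9
  have hc : (0.14:ℝ)/Real.exp 1 ≤ 0.14/2.7182818283 := by
    rw [div_le_div_iff₀ (Real.exp_pos 1) (by norm_num : (0:ℝ) < 2.7182818283)]
    nlinarith [h3]
  have h4 : (0.6931471803:ℝ) < Real.log 2 := Real.log_two_gt_d9
  nlinarith [mul_le_mul_of_nonneg_left h1 hx.le,
    mul_nonneg (by linarith : (0:ℝ) ≤ 1-x) (neg_nonneg.2 h2),
    mul_le_mul_of_nonneg_left hc hx.le]

/-- main inequality in natural-log form -/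
lemma F_sq_lt (x : ℝ) (hx : 0 < x) (hx2 : x ≤ 1/2) :
    (-x*Real.log x - (1-x)*Real.log (1-x) - 0.14/Real.exp 1*x)^2
      < (3.71943*0.6931471803^2)*(x*(1-x)) := by
  have hF0 := F_nonneg x hx hx2
  rcases le_or_gt x (1/20) with hsm | hbig
  · -- region A : small x
    set y := Real.sqrt (Real.sqrt x) with hy
    have hsx : 0 ≤ Real.sqrt x := Real.sqrt_nonneg x
    have hy2 : y^2 = Real.sqrt x := Real.sq_sqrt hsx
    have hy4 : y^4 = x := by
      have : y^4 = (y^2)^2 := by ring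
      rw [this, hy2]
      exact Real.sq_sqrt hx.le
    have hypos : 0 < y := Real.sqrt_pos.2 (Real.sqrt_pos.2 hx)
    have hlogx : Real.log x = 4 * Real.log y := by
      rw [← hy4, Real.log_pow]
      norm_num
    have hly : 1 - y⁻¹ ≤ Real.log y := Real.one_sub_inv_le_log_of_pos hypos
    have hxlogx : -x*Real.log x ≤ 4*y^3 - 4*y^4 := by
      have h5 : -Real.log x ≤ 4*(y⁻¹ - 1) := by rw [hlogx]; linarith
      have h6 : -x*Real.log x ≤ x*(4*(y⁻¹-1)) :=
        (mul_le_mul_of_nonneg_left h5 hx.le).trans_eq' (by ring)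
      have h7 : x*(4*(y⁻¹-1)) = 4*y^3 - 4*y^4 := by
        rw [← hy4]; field_simp
      linarith
    have h1x : (0:ℝ) < 1 - x := by linarith
    have hlog1x : 1 - (1-x)⁻¹ ≤ Real.log (1-x) := Real.one_sub_inv_le_log_of_pos h1x
    have hB : -(1-x)*Real.log (1-x) ≤ x := by
      have h8 : -(1-x)*Real.log (1-x) ≤ (1-x)*((1-x)⁻¹-1) := by
        nlinarith [mul_le_mul_of_nonneg_left hlog1x h1x.le]
      have h9 : (1-x)*((1-x)⁻¹-1) = x := by field_simp; ring
      linarith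
    have hcx : 0 ≤ 0.14/Real.exp 1*x := by positivity
    have hFU : -x*Real.log x - (1-x)*Real.log (1-x) - 0.14/Real.exp 1*x ≤ 4*y^3 - 3*y^4 := by
      have : x = y^4 := hy4.symm
      nlinarith
    have hysm : y^4 ≤ 1/20 := by rw [hy4]; exact hsm
    have hy48 : y ≤ 0.48 := by nlinarith [sq_nonneg (y - 0.48), sq_nonneg (y + 0.48), sq_nonneg (y^2 - 0.2304), sq_nonneg (y^2 + 0.2304)]
    have hsq : (-x*Real.log x - (1-x)*Real.log (1-x) - 0.14/Real.exp 1*x)^2 ≤ (4*y^3-3*y^4)^2 :=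
      pow_le_pow_left₀ hF0 hFU 2
    have hfin : (4*y^3-3*y^4)^2 < (3.71943*0.6931471803^2)*(y^4*(1-y^4)) := by
      nlinarith [hypos, hy48, hysm, sq_nonneg y, sq_nonneg (y-0.48), pow_pos hypos 3, pow_pos hypos 4, pow_pos hypos 6,
        mul_nonneg (mul_nonneg hypos.le hypos.le) (by linarith : (0:ℝ) ≤ 0.48 - y)]
    have hxxeq : y^4*(1-y^4) = x*(1-x) := by rw [hy4]
    rw [hxxeq] at hfin
    linarith
  · -- region B
    set t := 1 - 2*x with htdef
    have h0t : (0:ℝ) ≤ t := by simp only [htdef]; linarith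
    have h9t : t ≤ 0.9 := by simp only [htdef]; linarith
    have h1t : t < 1 := by linarith
    have e1 : (2:ℝ)*x = 1 - t := by simp only [htdef]; ring
    have e2 : (2:ℝ)*(1-x) = 1 + t := by simp only [htdef]; ring
    have hx' : (0:ℝ) < 2*x := by linarith
    have hlx : Real.log (2*x) = Real.log 2 + Real.log x := Real.log_mul (by norm_num) hx.ne'
    have hl1x : Real.log (2*(1-x)) = Real.log 2 + Real.log (1-x) :=
      Real.log_mul (by norm_num) (by linarith)
    -- bounds
    have hb1 := log_one_sub_ge t h0t h1t
    have hb2 := log_one_add_ge t h0t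
    have hA : -x*Real.log (1-t) ≤
        x*(t + t^2/2 + t^3/3 + t^4/4 + t^5/5 + t^6/6) + t^7/14 := by
      have h10 : x*(-Real.log (1-t)) ≤ x*((t + t^2/2 + t^3/3 + t^4/4 + t^5/5 + t^6/6) + t^7/(7*(1-t))) :=
        mul_le_mul_of_nonneg_left (by linarith) hx.le
      have h11 : x*(t^7/(7*(1-t))) = t^7/14 := by
        rw [show (1:ℝ)-t = 2*x by linarith]
        field_simp
        ring
      nlinarith [h10]
    have hB2 : -(1-x)*Real.log (1+t) ≤
        -(1-x)*(t - t^2/2 + t^3/3 - t^4/4 + t^5/5 - t^6/6) := by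
      have := mul_le_mul_of_nonneg_left hb2 (by linarith : (0:ℝ) ≤ 1-x)
      nlinarith [this]
    have hlog2 : Real.log 2 < 0.6931471808 := Real.log_two_lt_d9
    have h3 : (2.7182818286:ℝ) > Real.exp 1 := by
      have := Real.exp_one_lt_d9
      linarith
    have hcge : (0.14:ℝ)/2.7182818286 ≤ 0.14/Real.exp 1 := by
      rw [div_le_div_iff₀ (by norm_num : (0:ℝ) < 2.7182818286) (Real.exp_pos 1)]
      nlinarith [h3]
    have hcx : (0.14/2.7182818286)*x ≤ 0.14/Real.exp 1*x :=
      mul_le_mul_of_nonneg_right hcge hx.le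
    -- assemble F ≤ U t
    have hFU : -x*Real.log x - (1-x)*Real.log (1-x) - 0.14/Real.exp 1*x ≤
        0.6931471808 - (0.14/2.7182818286)*(1-t)/2 - t^2/2 - t^4/12 - t^6/30 + t^7/14 := by
      have d1 : Real.log x = Real.log (1-t) - Real.log 2 := by
        have h := hlx; rw [e1] at h; linarith
      have d2 : Real.log (1-x) = Real.log (1+t) - Real.log 2 := by
        have h := hl1x; rw [e2] at h; linarith
      rw [d1, d2]
      have hxe : x = (1-t)/2 := by linarith
      nlinarith [hA, hB2, hcx, hlog2]
    have hQ := Qpos t h0t h9t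
    have hsq : (-x*Real.log x - (1-x)*Real.log (1-x) - 0.14/Real.exp 1*x)^2 ≤
        (0.6931471808 - (0.14/2.7182818286)*(1-t)/2 - t^2/2 - t^4/12 - t^6/30 + t^7/14)^2 :=
      pow_le_pow_left₀ hF0 hFU 2
    have htt : 1 - t^2 = 4*(x*(1-x)) := by simp only [htdef]; ring
    rw [htt] at hQ
    linarith

theorem phi_sq_lt (x : ℝ) (hx : 0 < x) (hx2 : x ≤ 1 / 2) :
    (phi x) ^ 2 < 3.71943 := by
  have hxx : 0 < x*(1-x) := by nlinarith
  have hl2 : (0.6931471803:ℝ) < Real.log 2 := Real.log_two_gt_d9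
  have hl2p : (0:ℝ) < Real.log 2 := by linarith
  have hnum : binEnt x - (0.14 / Real.exp 1) * x * Real.logb 2 (Real.exp 1)
      = (-x*Real.log x - (1-x)*Real.log (1-x) - 0.14/Real.exp 1*x) / Real.log 2 := by
    simp only [binEnt, Real.logb, Real.log_exp]
    field_simp
  rw [phi, hnum, div_pow, div_pow, Real.sq_sqrt hxx.le]
  rw [div_div, div_lt_iff₀ (by positivity)]
  have hmain := F_sq_lt x hx hx2
  have hsq : (0.6931471803:ℝ)^2 ≤ (Real.log 2)^2 := by nlinarith
  calc (-x*Real.log x - (1-x)*Real.log (1-x) - 0.14/Real.exp 1*x)^2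
      < (3.71943*0.6931471803^2)*(x*(1-x)) := hmain
    _ ≤ 3.71943 * ((Real.log 2)^2 * (x*(1-x))) := by nlinarith
end

section
/- For every ε > 0 there exists N such that for all n ≥ N: if G is a graph on n vertices and every induced subgraph of G on exactly m := ⌈n/(log₂ n)³⌉ vertices has an independent set of size at least (log₂ m)²/((M²+ε)·ω(G)) for some constant M > 0, then χ(G)/ω(G) ≤ (M² + 2ε)·n/(log₂ n)². -/
open SimpleGraph Finset

/-- Greedy coloring: if every `m`-subset contains an independent set of size `≥ k`,
then the graph is `(m + n/k + 1)`-colorable. -/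
lemma greedy_colorable {n m k : ℕ} (G : SimpleGraph (Fin n)) (hk : 1 ≤ k)
    (H : ∀ S : Finset (Fin n), S.card = m →
      ∃ T ⊆ S, Gᶜ.IsClique (T : Set (Fin n)) ∧ k ≤ T.card) :
    G.Colorable (m + n / k + 1) := by
  have key : ∀ W : Finset (Fin n), ∃ C : Fin n → Fin (m + W.card / k + 1),
      ∀ v ∈ W, ∀ w ∈ W, G.Adj v w → C v ≠ C w := by
    intro W
    induction W using Finset.strongInduction with
    | _ W ih =>
      by_cases hWm : W.card < m
      · have hle : W.card ≤ m + W.card / k + 1 := by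
          have := Nat.zero_le (W.card / k); omega
        refine ⟨fun v => if h : v ∈ W then
            Fin.castLE hle ((W.orderIsoOfFin rfl).symm ⟨v, h⟩) else ⟨0, Nat.succ_pos _⟩,
          fun v hv w hw hadj hC => ?_⟩
        simp only [dif_pos hv, dif_pos hw] at hC
        have := (Fin.castLE_injective hle) hC
        have := (W.orderIsoOfFin rfl).symm.injective this
        exact G.ne_of_adj hadj (by simpa using congrArg Subtype.val this)
      · push_neg at hWm
        obtain ⟨S, hSW, hScard⟩ := Finset.exists_subset_card_eq hWm
        obtain ⟨T, hTS, hTind, hTk⟩ := H S hScard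
        have hTW : T ⊆ W := hTS.trans hSW
        have hTne : T.Nonempty := Finset.card_pos.mp (by omega)
        obtain ⟨C, hC⟩ := ih _ (Finset.sdiff_ssubset hTW hTne)
        have hkm : k ≤ m := le_trans hTk (hScard ▸ Finset.card_le_card hTS)
        have hkW : k ≤ W.card := le_trans hkm hWm
        have hsd : (W \ T).card ≤ W.card - k := by
          have := Finset.card_sdiff_of_subset hTW
          omega
        have hcard : (W \ T).card / k + 1 ≤ W.card / k := by
          calc (W \ T).card / k + 1 ≤ (W.card - k) / k + 1 :=
                Nat.add_le_add_right (Nat.div_le_div_right hsd) 1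
            _ = (W.card - k + k) / k := (Nat.add_div_right _ (by omega)).symm
            _ = W.card / k := by rw [Nat.sub_add_cancel hkW]
        have h' : m + (W \ T).card / k + 1 ≤ m + W.card / k := by omega
        refine ⟨fun v => if v ∈ T then Fin.last (m + W.card / k)
            else (Fin.castLE h' (C v)).castSucc, fun v hv w hw hadj hD => ?_⟩
        by_cases hvT : v ∈ T <;> by_cases hwT : w ∈ T
        · rcases hTind hvT hwT (G.ne_of_adj hadj) with ⟨-, hna⟩
          exact hna hadj
        · simp only [if_pos hvT, if_neg hwT] at hD
          exact (Fin.castSucc_lt_last _).ne hD.symm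
        · simp only [if_neg hvT, if_pos hwT] at hD
          exact (Fin.castSucc_lt_last _).ne hD
        · simp only [if_neg hvT, if_neg hwT] at hD
          have := Fin.castLE_injective h' (Fin.castSucc_injective _ hD)
          exact hC v (Finset.mem_sdiff.mpr ⟨hv, hvT⟩) w
            (Finset.mem_sdiff.mpr ⟨hw, hwT⟩) hadj this
  obtain ⟨C, hC⟩ := key Finset.univ
  have hEq : m + (Finset.univ : Finset (Fin n)).card / k + 1 = m + n / k + 1 := by
    rw [Finset.card_univ, Fintype.card_fin]
  exact ⟨SimpleGraph.Coloring.mk (fun v => Fin.cast hEq (C v)) fun {v w} hadj h =>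
    hC v (Finset.mem_univ v) w (Finset.mem_univ w) hadj (Fin.cast_injective hEq h)⟩

set_option maxHeartbeats 1000000 in
lemma eventual_bound (ε M : ℝ) (hε : 0 < ε) :
    ∀ᶠ n : ℕ in Filter.atTop,
      2 ≤ ⌈(n : ℝ) / (Real.logb 2 n) ^ 3⌉₊ ∧
      ((⌈(n : ℝ) / (Real.logb 2 n) ^ 3⌉₊ : ℝ) + 1
        + (M ^ 2 + ε) * n / (Real.logb 2 (⌈(n : ℝ) / (Real.logb 2 n) ^ 3⌉₊ : ℝ)) ^ 2
        ≤ (M ^ 2 + 2 * ε) * n / (Real.logb 2 n) ^ 2) := by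
  have hlog2 : (0 : ℝ) < Real.log 2 := Real.log_pos one_lt_two
  set c : ℝ := (M ^ 2 + ε) / (M ^ 2 + 3 / 2 * ε) with hc
  have hden : (0 : ℝ) < M ^ 2 + 3 / 2 * ε := by positivity
  have hc0 : 0 < c := by positivity
  have hc1 : c < 1 := by
    rw [hc, div_lt_one hden]; linarith
  set δ : ℝ := (1 - c) / 9 with hδ
  have hδ0 : 0 < δ := by rw [hδ]; linarith
  have hlt : Filter.Tendsto (fun n : ℕ => Real.logb 2 (n : ℝ)) Filter.atTop Filter.atTop :=
    (Real.tendsto_logb_atTop one_lt_two).comp tendsto_natCast_atTop_atTop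
  have E1 : ∀ᶠ n : ℕ in Filter.atTop, max 1 (4 / ε) ≤ Real.logb 2 (n : ℝ) :=
    hlt.eventually_ge_atTop _
  have E2 : ∀ᶠ n : ℕ in Filter.atTop,
      ‖Real.log (n : ℝ) ^ 3‖ ≤ (Real.log 2 ^ 3 / 2) * ‖(n : ℝ)‖ := by
    have h := (Real.isLittleO_pow_log_id_atTop (n := 3)).def
      (show (0:ℝ) < Real.log 2 ^ 3 / 2 by positivity)
    exact tendsto_natCast_atTop_atTop.eventually h
  have E3 : ∀ᶠ n : ℕ in Filter.atTop,
      ‖Real.log (Real.logb 2 (n : ℝ))‖ ≤ (δ * Real.log 2) * ‖Real.logb 2 (n : ℝ)‖ := by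
    have h := Real.isLittleO_log_id_atTop.def
      (show (0:ℝ) < δ * Real.log 2 by positivity)
    exact hlt.eventually h
  filter_upwards [E1, E2, E3, Filter.eventually_ge_atTop 1] with n h1 h2 h3 hn1
  set l : ℝ := Real.logb 2 (n : ℝ) with hl
  have hl1 : 1 ≤ l := le_trans (le_max_left _ _) h1
  have hl4 : 4 / ε ≤ l := le_trans (le_max_right _ _) h1
  have hl0 : 0 < l := by linarith
  have hn0 : (0 : ℝ) < n := by exact_mod_cast hn1
  have hlogn0 : 0 ≤ Real.log (n : ℝ) := Real.log_nonneg (by exact_mod_cast hn1)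
  -- l^3 ≤ n/2
  have hl3 : l ^ 3 ≤ (n : ℝ) / 2 := by
    rw [Real.norm_eq_abs, Real.norm_eq_abs, abs_of_nonneg (by positivity),
      abs_of_nonneg hn0.le] at h2
    have : l ^ 3 = Real.log (n : ℝ) ^ 3 / Real.log 2 ^ 3 := by
      rw [hl, Real.logb]; ring
    rw [this]
    rw [div_le_div_iff₀ (by positivity) (by norm_num)]
    nlinarith [h2]
  -- logb 2 l ≤ δ * l
  have hll : Real.logb 2 l ≤ δ * l := by
    rw [Real.norm_eq_abs, Real.norm_eq_abs, abs_of_nonneg (by linarith : (0:ℝ) ≤ l),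
      abs_of_nonneg (Real.log_nonneg hl1)] at h3
    rw [Real.logb, div_le_iff₀ hlog2]
    nlinarith [h3]
  set x : ℝ := (n : ℝ) / l ^ 3 with hx
  have hx2 : 2 ≤ x := by
    rw [hx, le_div_iff₀ (by positivity)]
    linarith
  have hx0 : 0 < x := by linarith
  set m : ℕ := ⌈x⌉₊ with hmdef
  have hxm : x ≤ (m : ℝ) := Nat.le_ceil x
  have hm2 : 2 ≤ m := by
    have : (2 : ℝ) ≤ (m : ℝ) := le_trans hx2 hxm
    exact_mod_cast this
  have hmlt : (m : ℝ) < x + 1 := Nat.ceil_lt_add_one hx0.le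
  refine ⟨hm2, ?_⟩
  set L : ℝ := Real.logb 2 (m : ℝ) with hLdef
  have hlx : Real.logb 2 x = l - 3 * Real.logb 2 l := by
    rw [hx, Real.logb_div (ne_of_gt hn0) (by positivity), Real.logb_pow, ← hl]
    norm_num
  have hLlow : l - 3 * Real.logb 2 l ≤ L := by
    rw [← hlx, hLdef]
    exact Real.logb_le_logb_of_le one_lt_two hx0 hxm
  have hLl : (1 - 3 * δ) * l ≤ L := by
    have hrng : (1 - 3 * δ) * l = l - 3 * (δ * l) := by ring
    linarith [hll, hLlow, hrng.le, hrng.ge]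
  have h3δ : 1 - 3 * δ = (2 + c) / 3 := by rw [hδ]; ring
  have h13 : 0 < 1 - 3 * δ := by rw [h3δ]; linarith
  have hL0 : 0 < L := lt_of_lt_of_le (mul_pos h13 hl0) hLl
  have hcl2 : c * l ^ 2 ≤ L ^ 2 := by
    have ha : 0 ≤ (1 - 3 * δ) * l := (mul_pos h13 hl0).le
    have hsq : ((1 - 3 * δ) * l) ^ 2 ≤ L ^ 2 := pow_le_pow_left₀ ha hLl 2
    have hkey : c ≤ ((2 + c) / 3) ^ 2 := by nlinarith [sq_nonneg (1 - c)]
    calc c * l ^ 2 ≤ ((2 + c) / 3) ^ 2 * l ^ 2 :=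
          mul_le_mul_of_nonneg_right hkey (sq_nonneg l)
      _ = ((1 - 3 * δ) * l) ^ 2 := by rw [h3δ]; ring
      _ ≤ L ^ 2 := hsq
  -- second summand
  have hsummand : (M ^ 2 + ε) * n / L ^ 2 ≤ (M ^ 2 + 3 / 2 * ε) * n / l ^ 2 := by
    rw [div_le_div_iff₀ (by positivity) (by positivity)]
    have hce : (M ^ 2 + ε) = c * (M ^ 2 + 3 / 2 * ε) := by
      rw [hc]; field_simp
    have hmul : (M ^ 2 + 3 / 2 * ε) * n * (c * l ^ 2) ≤ (M ^ 2 + 3 / 2 * ε) * n * L ^ 2 :=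
      mul_le_mul_of_nonneg_left hcl2 (by positivity)
    calc (M ^ 2 + ε) * n * l ^ 2 = (M ^ 2 + 3 / 2 * ε) * n * (c * l ^ 2) := by
          rw [hce]; ring
      _ ≤ (M ^ 2 + 3 / 2 * ε) * n * L ^ 2 := hmul
  -- first summand
  have hinvl : 1 / l ≤ ε / 4 := by
    rw [div_le_div_iff₀ hl0 (by norm_num)]
    calc (1:ℝ) * 4 = 4 := by ring
      _ = (4 / ε) * ε := by field_simp
      _ ≤ l * ε := mul_le_mul_of_nonneg_right hl4 hε.le
      _ = ε * l := by ring
  have hq1 : (n : ℝ) / l ^ 3 ≤ ε / 4 * ((n : ℝ) / l ^ 2) := by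
    have heq : (n : ℝ) / l ^ 3 = ((n : ℝ) / l ^ 2) * (1 / l) := by
      rw [div_mul_div_comm, mul_one, ← pow_succ]
    rw [heq]
    calc ((n : ℝ) / l ^ 2) * (1 / l) ≤ ((n : ℝ) / l ^ 2) * (ε / 4) :=
          mul_le_mul_of_nonneg_left hinvl (by positivity)
      _ = ε / 4 * ((n : ℝ) / l ^ 2) := by ring
  have hq2 : (2 : ℝ) ≤ ε / 4 * ((n : ℝ) / l ^ 2) := by
    have heq : (n : ℝ) / l ^ 2 = x * l := by
      rw [hx, div_mul_eq_mul_div, div_eq_div_iff (by positivity) (by positivity)]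
      ring
    rw [heq]
    have h2l : 2 * l ≤ x * l := mul_le_mul_of_nonneg_right hx2 hl0.le
    have h8 : 8 / ε ≤ 2 * l := by
      have h48 : 8 / ε = 2 * (4 / ε) := by ring
      linarith
    have : 8 / ε * (ε/4) ≤ x * l * (ε/4) := by
      apply mul_le_mul_of_nonneg_right _ (by positivity)
      linarith
    calc (2:ℝ) = 8 / ε * (ε/4) := by field_simp; ring
      _ ≤ x * l * (ε/4) := this
      _ = ε / 4 * (x * l) := by ring
  have hfirst : (m : ℝ) + 1 ≤ ε / 2 * ((n : ℝ) / l ^ 2) := by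
    have : (m : ℝ) + 1 < x + 2 := by linarith
    linarith [hq1, hq2, hx.le, hx.ge]
  have hsum : ε / 2 * ((n : ℝ) / l ^ 2) + (M ^ 2 + 3 / 2 * ε) * n / l ^ 2
      = (M ^ 2 + 2 * ε) * n / l ^ 2 := by
    field_simp
    ring
  linarith [hfirst, hsummand, hsum]

theorem quantitative_upper_bound (ε M : ℝ) (hε : 0 < ε) (hM : 0 < M) :
    ∃ N : ℕ, ∀ n : ℕ, N ≤ n → ∀ G : SimpleGraph (Fin n), 1 ≤ G.cliqueNum →
      (∀ S : Finset (Fin n), S.card = ⌈(n : ℝ) / (Real.logb 2 n) ^ 3⌉₊ →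
        ∃ T ⊆ S, Gᶜ.IsClique (T : Set (Fin n)) ∧
          (Real.logb 2 (⌈(n : ℝ) / (Real.logb 2 n) ^ 3⌉₊ : ℝ)) ^ 2 /
            ((M ^ 2 + ε) * (G.cliqueNum : ℝ)) ≤ (T.card : ℝ)) →
      (chromNum G : ℝ) / (G.cliqueNum : ℝ) ≤
        (M ^ 2 + 2 * ε) * (n : ℝ) / (Real.logb 2 n) ^ 2 := by
  obtain ⟨N, hN⟩ := Filter.eventually_atTop.mp (eventual_bound ε M hε)
  refine ⟨N, fun n hn G hω hH => ?_⟩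
  obtain ⟨hm2, hfinal⟩ := hN n hn
  set m : ℕ := ⌈(n : ℝ) / (Real.logb 2 n) ^ 3⌉₊ with hm
  set L : ℝ := Real.logb 2 (m : ℝ) with hLdef
  have hω0 : (0 : ℝ) < (G.cliqueNum : ℝ) := by exact_mod_cast hω
  have hω1 : (1 : ℝ) ≤ (G.cliqueNum : ℝ) := by exact_mod_cast hω
  have hL0 : 0 < L := Real.logb_pos one_lt_two (by exact_mod_cast hm2)
  have hMε : (0 : ℝ) < M ^ 2 + ε := by positivity
  set r : ℝ := L ^ 2 / ((M ^ 2 + ε) * (G.cliqueNum : ℝ)) with hrdef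
  have hr0 : 0 < r := by positivity
  set k : ℕ := ⌈r⌉₊ with hkdef
  have hk1 : 1 ≤ k := Nat.ceil_pos.mpr hr0
  have hcol : G.Colorable (m + n / k + 1) := by
    refine greedy_colorable G hk1 fun S hS => ?_
    obtain ⟨T, hTS, hTind, hTr⟩ := hH S hS
    exact ⟨T, hTS, hTind, Nat.ceil_le.mpr hTr⟩
  have hχ : chromNum G ≤ m + n / k + 1 := by
    have h1 := hcol.chromaticNumber_le
    have h2 := ENat.toNat_le_toNat h1 (ENat.coe_ne_top _)
    simpa only [chromNum, ENat.toNat_coe] using h2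
  have hrk : r ≤ (k : ℝ) := Nat.le_ceil r
  have hdiv : ((n / k : ℕ) : ℝ) ≤ (n : ℝ) / r := by
    calc ((n / k : ℕ) : ℝ) ≤ (n : ℝ) / (k : ℝ) := Nat.cast_div_le
      _ ≤ (n : ℝ) / r := by gcongr
  have hχR : (chromNum G : ℝ) ≤ (m : ℝ) + (n : ℝ) / r + 1 := by
    have : (chromNum G : ℝ) ≤ ((m + n / k + 1 : ℕ) : ℝ) := by exact_mod_cast hχ
    push_cast at this
    linarith
  have hstep : (chromNum G : ℝ) / (G.cliqueNum : ℝ)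
      ≤ ((m : ℝ) + 1) + (M ^ 2 + ε) * n / L ^ 2 := by
    have h1 : (chromNum G : ℝ) / (G.cliqueNum : ℝ)
        ≤ ((m : ℝ) + (n : ℝ) / r + 1) / (G.cliqueNum : ℝ) := by
      gcongr
    have h2 : ((m : ℝ) + (n : ℝ) / r + 1) / (G.cliqueNum : ℝ)
        = ((m : ℝ) + 1) / (G.cliqueNum : ℝ) + ((n : ℝ) / r) / (G.cliqueNum : ℝ) := by
      ring
    have h3 : ((m : ℝ) + 1) / (G.cliqueNum : ℝ) ≤ (m : ℝ) + 1 :=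
      div_le_self (by positivity) hω1
    have h4 : ((n : ℝ) / r) / (G.cliqueNum : ℝ) = (M ^ 2 + ε) * n / L ^ 2 := by
      rw [hrdef]
      field_simp
    rw [h2, h4] at h1
    linarith
  calc (chromNum G : ℝ) / (G.cliqueNum : ℝ)
      ≤ ((m : ℝ) + 1) + (M ^ 2 + ε) * n / L ^ 2 := hstep
    _ ≤ (M ^ 2 + 2 * ε) * n / (Real.logb 2 n) ^ 2 := by
        rw [hLdef, hm]
        linarith [hfinal]
end

section
/- Erdős' lower bound on f: for infinitely many n, there exists a graph G on n vertices with χ(G)/ω(G) ≥ (1/4 + o(1))·n/(log₂ n)²; more precisely, assuming R(k,k) ≥ 2^{k/2} for all k ≥ 2, for every n ≥ 2 there is a graph G on n vertices with χ(G)/ω(G) ≥ n/(2·log₂ n + 2)². -/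
open SimpleGraph Finset

lemma aux_cliqueNum_le {n k : ℕ} {G : SimpleGraph (Fin n)}
    (h : ¬ ∃ A : Finset (Fin n), G.IsNClique (k + 1) A) : G.cliqueNum ≤ k := by
  by_contra hlt
  push_neg at hlt
  obtain ⟨s, hs⟩ := G.exists_isNClique_cliqueNum
  obtain ⟨t, hts, htcard⟩ := Finset.exists_subset_card_eq (n := k + 1)
    (by rw [hs.card_eq]; exact hlt)
  exact h ⟨t, hs.isClique.subset hts, htcard⟩

lemma aux_card_le_chrom_mul {n k : ℕ} {G : SimpleGraph (Fin n)}
    (h : ¬ ∃ B : Finset (Fin n), Gᶜ.IsNClique (k + 1) B) :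
    n ≤ chromNum G * k := by
  classical
  obtain ⟨C⟩ := G.colorable_chromaticNumber_of_fintype
  have hfib : ∀ c : Fin (chromNum G),
      (Finset.univ.filter (fun v => C v = c)).card ≤ k := by
    intro c
    by_contra hlt
    push_neg at hlt
    obtain ⟨t, hts, htcard⟩ := Finset.exists_subset_card_eq (n := k + 1) hlt
    refine h ⟨t, ?_, htcard⟩
    intro v hv w hw hne
    have hv' := hts hv
    have hw' := hts hw
    simp only [Finset.mem_coe, Finset.mem_filter] at hv' hw'
    rw [compl_adj]
    refine ⟨hne, fun hadj => C.valid hadj ?_⟩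
    rw [hv'.2, hw'.2]
  have : (Finset.univ : Finset (Fin n)).card =
      ∑ c : Fin (chromNum G), (Finset.univ.filter (fun v => C v = c)).card :=
    by rw [Finset.card_eq_sum_card_fiberwise (fun v _ => Finset.mem_univ (C v))]; exact Finset.sum_congr rfl (fun c _ => by congr)
  calc n = (Finset.univ : Finset (Fin n)).card := by simp
    _ = ∑ c : Fin (chromNum G), (Finset.univ.filter (fun v => C v = c)).card := this
    _ ≤ ∑ _c : Fin (chromNum G), k := Finset.sum_le_sum (fun c _ => hfib c)
    _ = chromNum G * k := by simp [Finset.sum_const, mul_comm]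

theorem erdos_lower_bound_f
    (hR : ∀ k : ℕ, 2 ≤ k → (2 : ℝ) ^ ((k : ℝ) / 2) ≤ (ramsey k k : ℝ)) :
    ∀ n : ℕ, 2 ≤ n → ∃ G : SimpleGraph (Fin n),
      (n : ℝ) / (2 * Real.logb 2 n + 2) ^ 2 ≤
        (chromNum G : ℝ) / (G.cliqueNum : ℝ) := by
  classical
  intro n hn
  set P : ℕ → Prop := fun j => ramsey j j ≤ n with hP
  -- P 2 holds
  have hP2 : P 2 := by
    have h2mem : (2 : ℕ) ∈ {m | ∀ G : SimpleGraph (Fin m),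
        (∃ A : Finset (Fin m), G.IsNClique 2 A) ∨
        (∃ B : Finset (Fin m), Gᶜ.IsNClique 2 B)} := by
      intro G
      by_cases hadj : G.Adj 0 1
      · left
        exact ⟨{0, 1}, by
          constructor
          · intro v hv w hw hne
            simp only [Finset.coe_insert, Set.mem_insert_iff, Finset.coe_singleton,
              Set.mem_singleton_iff] at hv hw
            rcases hv with rfl | rfl <;> rcases hw with rfl | rfl <;>
              first | exact absurd rfl hne | exact hadj | exact hadj.symm
          · simp⟩
      · right
        exact ⟨{0, 1}, by
          constructor
          · intro v hv w hw hne
            simp only [Finset.coe_insert, Set.mem_insert_iff, Finset.coe_singleton,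
              Set.mem_singleton_iff] at hv hw
            have h01 : Gᶜ.Adj 0 1 := by
              rw [compl_adj]; exact ⟨by decide, hadj⟩
            rcases hv with rfl | rfl <;> rcases hw with rfl | rfl <;>
              first | exact absurd rfl hne | exact h01 | exact h01.symm
          · simp⟩
    have : ramsey 2 2 ≤ 2 := Nat.sInf_le h2mem
    exact le_trans this hn
  -- P (2n+2) fails
  have hPbig : ¬ P (2 * n + 2) := by
    intro hle
    have h1 : (2 : ℝ) ^ (((2 * n + 2 : ℕ) : ℝ) / 2) ≤ (ramsey (2 * n + 2) (2 * n + 2) : ℝ) :=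
      hR _ (by omega)
    have h2 : (ramsey (2 * n + 2) (2 * n + 2) : ℝ) ≤ n := by exact_mod_cast hle
    have h3 : ((2 * n + 2 : ℕ) : ℝ) / 2 = ((n + 1 : ℕ) : ℝ) := by push_cast; ring
    rw [h3, Real.rpow_natCast] at h1
    have h4 : (n : ℝ) < 2 ^ (n + 1) := by
      exact_mod_cast (Nat.lt_two_pow_self (n := n)).trans_le
        (Nat.pow_le_pow_right (by norm_num) (Nat.le_succ n))
    linarith
  set k : ℕ := Nat.findGreatest P (2 * n + 2) with hk
  have hk2 : 2 ≤ k := Nat.le_findGreatest (by omega) hP2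
  have hk0 : k ≠ 0 := by omega
  have hPk : P k := Nat.findGreatest_of_ne_zero hk.symm hk0
  have hklt : k < 2 * n + 2 := by
    rcases lt_or_eq_of_le (Nat.findGreatest_le (P := P) (2 * n + 2)) with h | h
    · exact h
    · exact absurd (h ▸ hPk) hPbig
  have hPk1 : ¬ P (k + 1) := Nat.findGreatest_is_greatest (P := P) (n := 2 * n + 2) (by omega) (by omega)
  -- get the Ramsey graph
  have hnotmem : n ∉ {m | ∀ G : SimpleGraph (Fin m),
      (∃ A : Finset (Fin m), G.IsNClique (k + 1) A) ∨
      (∃ B : Finset (Fin m), Gᶜ.IsNClique (k + 1) B)} := by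
    intro hmem
    exact hPk1 (Nat.sInf_le hmem)
  simp only [Set.mem_setOf_eq, not_forall] at hnotmem
  obtain ⟨G, hG⟩ := hnotmem
  push_neg at hG
  obtain ⟨hA, hB⟩ := hG
  refine ⟨G, ?_⟩
  have hωle : G.cliqueNum ≤ k := aux_cliqueNum_le (by simpa using hA)
  have hcount : n ≤ chromNum G * k := aux_card_le_chrom_mul (by simpa using hB)
  have hω1 : 1 ≤ G.cliqueNum := by
    have : ({(⟨0, by omega⟩ : Fin n)} : Finset (Fin n)).card ≤ G.cliqueNum :=
      SimpleGraph.IsClique.card_le_cliqueNum (tc := by simp [SimpleGraph.isClique_iff])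
    simpa using this
  -- k ≤ 2 * logb 2 n
  have hkreal : (k : ℝ) ≤ 2 * Real.logb 2 n := by
    have h1 : (2 : ℝ) ^ ((k : ℝ) / 2) ≤ (ramsey k k : ℝ) := hR k hk2
    have h2 : (ramsey k k : ℝ) ≤ n := by exact_mod_cast hPk
    have h3 : (2 : ℝ) ^ ((k : ℝ) / 2) ≤ n := h1.trans h2
    have h4 : Real.logb 2 ((2 : ℝ) ^ ((k : ℝ) / 2)) ≤ Real.logb 2 n :=
      Real.logb_le_logb_of_le (by norm_num) (by positivity) h3
    rwa [Real.logb_rpow (by norm_num) (by norm_num), div_le_iff₀ (by norm_num), mul_comm] at h4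
  -- final real arithmetic
  have hkpos : (0 : ℝ) < k := by positivity
  have hωpos : (0 : ℝ) < (G.cliqueNum : ℝ) := by exact_mod_cast hω1
  have hLpos : (0 : ℝ) < 2 * Real.logb 2 n + 2 := by
    have : (0 : ℝ) < (k : ℝ) := hkpos
    linarith
  have hωk : (G.cliqueNum : ℝ) ≤ k := by exact_mod_cast hωle
  have hcount' : (n : ℝ) ≤ (chromNum G : ℝ) * k := by exact_mod_cast hcount
  have hχ0 : (0 : ℝ) ≤ (chromNum G : ℝ) := by positivity
  have step1 : (n : ℝ) / (2 * Real.logb 2 n + 2) ^ 2 ≤ (n : ℝ) / (k : ℝ) ^ 2 := by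
    apply div_le_div_of_nonneg_left (by positivity) (by positivity)
    have : (k : ℝ) ≤ 2 * Real.logb 2 n + 2 := by linarith
    exact pow_le_pow_left₀ (le_of_lt hkpos) this 2
  have step2 : (n : ℝ) / (k : ℝ) ^ 2 ≤ (chromNum G : ℝ) / (G.cliqueNum : ℝ) := by
    rw [div_le_div_iff₀ (by positivity) hωpos]
    nlinarith [hcount', hωk, hχ0, hkpos.le, hωpos.le]
  linarith
end
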